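/- Let A ∈ ℝ^{n×n}, B ∈ ℝ^{n×p}, F ∈ ℝ^{r×n}, t₁ > 0, and suppose M := F·W_c(t₁)·Fᵀ is invertible (so M is symmetric positive definite). Then the maximum target control energy satisfies sup over z* ∈ ℝ^r with ‖z*‖ = 1 of (inf over continuous controls u with F·∫₀^{t₁} exp(A(t₁−τ))·B·u(τ) dτ = z* of ∫₀^{t₁} ‖u(t)‖² dt) = 1 / λ_min(M), where λ_min(M) is the smallest eigenvalue of M. -/

import Mathlib

open Matrix intervalIntegral
/-- Controllability matrix of the pair `(A, B)`: the horizontal block concatenation of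
`B, A*B, A²*B, …, A^(n-1)*B`, indexed so that entry `(i, (k, j))` is `(A^k * B) i j`. -/
noncomputable def ctrbMat {n p : ℕ} (A : Matrix (Fin n) (Fin n) ℝ)
    (B : Matrix (Fin n) (Fin p) ℝ) : Matrix (Fin n) (Fin n × Fin p) ℝ :=
  fun i kj => (A ^ (kj.1 : ℕ) * B) i kj.2

/-- Controllability Gramian `W_c(t₁) = ∫₀^{t₁} exp(As) B Bᵀ exp(Aᵀs) ds` (entrywise integral). -/
noncomputable def ctrbGram {n p : ℕ} (A : Matrix (Fin n) (Fin n) ℝ)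
    (B : Matrix (Fin n) (Fin p) ℝ) (t₁ : ℝ) : Matrix (Fin n) (Fin n) ℝ :=
  fun i j => ∫ s in (0:ℝ)..t₁,
    (NormedSpace.exp (s • A) * B * Bᵀ * NormedSpace.exp (s • Aᵀ)) i j

attribute [local instance] Matrix.linftyOpNormedRing Matrix.linftyOpNormedAlgebra


namespace MaxTCEAux

lemma cont_dot {k : ℕ} {f g : ℝ → Fin k → ℝ} (hf : ∀ i, Continuous fun t => f t i)
    (hg : ∀ i, Continuous fun t => g t i) : Continuous fun t => f t ⬝ᵥ g t := by
  simp only [dotProduct]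
  exact continuous_finset_sum _ fun i _ => (hf i).mul (hg i)

lemma cont_mulVec {k l : ℕ} {X : ℝ → Matrix (Fin k) (Fin l) ℝ} {u : ℝ → Fin l → ℝ}
    (hX : Continuous X) (hu : Continuous u) (i : Fin k) :
    Continuous fun τ => (X τ *ᵥ u τ) i :=
  cont_dot (fun j => hX.matrix_elem i j) (fun j => (continuous_apply j).comp hu)

lemma cont_vecMul {k l : ℕ} {X : ℝ → Matrix (Fin k) (Fin l) ℝ} {v : ℝ → Fin k → ℝ}
    (hX : Continuous X) (hv : Continuous v) (j : Fin l) :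
    Continuous fun τ => (v τ ᵥ* X τ) j :=
  cont_dot (fun i => (continuous_apply i).comp hv) (fun i => hX.matrix_elem i j)

lemma dot_integral {k : ℕ} (a b : ℝ) (v : Fin k → ℝ) (f : ℝ → Fin k → ℝ)
    (hf : ∀ i, Continuous fun s => f s i) :
    (∫ s in a..b, v ⬝ᵥ f s) = v ⬝ᵥ (fun i => ∫ s in a..b, f s i) := by
  simp only [dotProduct]
  rw [intervalIntegral.integral_finset_sum (f := fun i s => v i * f s i)
    (fun i _ => ((continuous_const.mul (hf i)).intervalIntegrable a b))]
  exact Finset.sum_congr rfl fun i _ => intervalIntegral.integral_const_mul _ _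

lemma integral_mulVec_entry {k l : ℕ} {X : ℝ → Matrix (Fin k) (Fin l) ℝ} (hX : Continuous X)
    (w : Fin l → ℝ) (a b : ℝ) (i : Fin k) :
    (∫ τ in a..b, (X τ *ᵥ w) i) = ((fun c d => ∫ τ in a..b, X τ c d) *ᵥ w) i := by
  calc (∫ τ in a..b, (X τ *ᵥ w) i) = ∫ τ in a..b, w ⬝ᵥ (fun j => X τ i j) := by
        congr 1; funext τ; exact dotProduct_comm _ _
    _ = w ⬝ᵥ (fun j => ∫ τ in a..b, X τ i j) :=
        dot_integral a b w _ (fun j => hX.matrix_elem i j)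
    _ = _ := dotProduct_comm _ _

variable {n p r : ℕ} (A : Matrix (Fin n) (Fin n) ℝ) (B : Matrix (Fin n) (Fin p) ℝ)
  (F : Matrix (Fin r) (Fin n) ℝ) (t₁ : ℝ)

/-- `exp(A(t₁-τ)) B`. -/
noncomputable def Gm (τ : ℝ) : Matrix (Fin n) (Fin p) ℝ :=
  NormedSpace.exp ((t₁ - τ) • A) * B

lemma contGm : Continuous (Gm A B t₁) :=
  (NormedSpace.exp_continuous.comp
    ((continuous_const.sub continuous_id).smul continuous_const)).matrix_mul continuous_const

lemma exp_smul_transpose (s : ℝ) :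
    NormedSpace.exp (s • Aᵀ) = (NormedSpace.exp (s • A))ᵀ := by
  rw [← Matrix.transpose_smul, Matrix.exp_transpose]

lemma gramW (k l : Fin n) :
    (∫ τ in (0:ℝ)..t₁, (Gm A B t₁ τ * (Gm A B t₁ τ)ᵀ) k l) = ctrbGram A B t₁ k l := by
  have h : ∀ τ : ℝ, (Gm A B t₁ τ * (Gm A B t₁ τ)ᵀ) k l
      = (fun s => (NormedSpace.exp (s • A) * B * Bᵀ * NormedSpace.exp (s • Aᵀ)) k l)
          (t₁ - τ) := by
    intro τ
    have he := exp_smul_transpose A (t₁ - τ)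
    simp only [Gm, he, Matrix.transpose_mul, Matrix.mul_assoc]
  have hcv := intervalIntegral.integral_comp_sub_left
    (a := (0:ℝ)) (b := t₁)
    (fun s => (NormedSpace.exp (s • A) * B * Bᵀ * NormedSpace.exp (s • Aᵀ)) k l) t₁
  rw [sub_self, sub_zero] at hcv
  have h2 : (∫ τ in (0:ℝ)..t₁, (Gm A B t₁ τ * (Gm A B t₁ τ)ᵀ) k l)
      = ∫ τ in (0:ℝ)..t₁,
          (fun s => (NormedSpace.exp (s • A) * B * Bᵀ * NormedSpace.exp (s • Aᵀ)) k l)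
            (t₁ - τ) := by
    congr 1; funext τ; exact h τ
  rw [h2, hcv]; rfl

lemma key1 (w : Fin r → ℝ) (u : ℝ → Fin p → ℝ) (hu : Continuous u) :
    w ⬝ᵥ F.mulVec (fun i => ∫ τ in (0:ℝ)..t₁,
        (NormedSpace.exp ((t₁ - τ) • A) * B).mulVec (u τ) i)
      = ∫ τ in (0:ℝ)..t₁, (w ᵥ* (F * Gm A B t₁ τ)) ⬝ᵥ u τ := by
  have hGu : ∀ i, Continuous fun τ => (Gm A B t₁ τ *ᵥ u τ) i :=
    cont_mulVec (contGm A B t₁) hu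
  calc w ⬝ᵥ F.mulVec (fun i => ∫ τ in (0:ℝ)..t₁,
        (NormedSpace.exp ((t₁ - τ) • A) * B).mulVec (u τ) i)
      = (w ᵥ* F) ⬝ᵥ (fun i => ∫ τ in (0:ℝ)..t₁, (Gm A B t₁ τ *ᵥ u τ) i) := by
        rw [Matrix.dotProduct_mulVec]; rfl
    _ = ∫ τ in (0:ℝ)..t₁, (w ᵥ* F) ⬝ᵥ (Gm A B t₁ τ *ᵥ u τ) := (dot_integral _ _ _ _ hGu).symm
    _ = ∫ τ in (0:ℝ)..t₁, (w ᵥ* (F * Gm A B t₁ τ)) ⬝ᵥ u τ := by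
        congr 1; funext τ
        rw [Matrix.dotProduct_mulVec, Matrix.vecMul_vecMul]

lemma key3 (i j : Fin r) :
    (∫ τ in (0:ℝ)..t₁, ((F * Gm A B t₁ τ) * (F * Gm A B t₁ τ)ᵀ) i j)
      = (F * ctrbGram A B t₁ * Fᵀ) i j := by
  have hGGF : ∀ k, Continuous fun τ => ((Gm A B t₁ τ * (Gm A B t₁ τ)ᵀ) * Fᵀ) k j :=
    fun k => (((contGm A B t₁).matrix_mul (contGm A B t₁).matrix_transpose).matrix_mul
      continuous_const).matrix_elem k j
  have h1 : ∀ τ, ((F * Gm A B t₁ τ) * (F * Gm A B t₁ τ)ᵀ) i j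
      = (fun k => F i k) ⬝ᵥ (fun k => ((Gm A B t₁ τ * (Gm A B t₁ τ)ᵀ) * Fᵀ) k j) := by
    intro τ
    rw [show (F * Gm A B t₁ τ) * (F * Gm A B t₁ τ)ᵀ
        = F * ((Gm A B t₁ τ * (Gm A B t₁ τ)ᵀ) * Fᵀ) by
      rw [Matrix.transpose_mul]; simp only [Matrix.mul_assoc]]
    rw [Matrix.mul_apply]; rfl
  have h3 : ∀ k, (∫ τ in (0:ℝ)..t₁, ((Gm A B t₁ τ * (Gm A B t₁ τ)ᵀ) * Fᵀ) k j)
      = (ctrbGram A B t₁ * Fᵀ) k j := by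
    intro k
    have hGG : ∀ l, Continuous fun τ => (Gm A B t₁ τ * (Gm A B t₁ τ)ᵀ) k l :=
      fun l => ((contGm A B t₁).matrix_mul (contGm A B t₁).matrix_transpose).matrix_elem k l
    calc (∫ τ in (0:ℝ)..t₁, ((Gm A B t₁ τ * (Gm A B t₁ τ)ᵀ) * Fᵀ) k j)
        = ∫ τ in (0:ℝ)..t₁, (fun l => Fᵀ l j) ⬝ᵥ (fun l => (Gm A B t₁ τ * (Gm A B t₁ τ)ᵀ) k l) := by
          congr 1; funext τ; rw [Matrix.mul_apply]; exact Finset.sum_congr rfl fun l _ => mul_comm _ _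
      _ = (fun l => Fᵀ l j) ⬝ᵥ (fun l => ∫ τ in (0:ℝ)..t₁, (Gm A B t₁ τ * (Gm A B t₁ τ)ᵀ) k l) :=
          dot_integral _ _ _ _ hGG
      _ = (fun l => Fᵀ l j) ⬝ᵥ (fun l => ctrbGram A B t₁ k l) := by
          congr 1; funext l; exact gramW A B t₁ k l
      _ = (ctrbGram A B t₁ * Fᵀ) k j := by
          rw [Matrix.mul_apply]; exact Finset.sum_congr rfl fun l _ => mul_comm _ _
  calc (∫ τ in (0:ℝ)..t₁, ((F * Gm A B t₁ τ) * (F * Gm A B t₁ τ)ᵀ) i j)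
      = ∫ τ in (0:ℝ)..t₁,
          (fun k => F i k) ⬝ᵥ (fun k => ((Gm A B t₁ τ * (Gm A B t₁ τ)ᵀ) * Fᵀ) k j) := by
        congr 1; funext τ; exact h1 τ
    _ = (fun k => F i k) ⬝ᵥ (fun k => ∫ τ in (0:ℝ)..t₁,
          ((Gm A B t₁ τ * (Gm A B t₁ τ)ᵀ) * Fᵀ) k j) := dot_integral _ _ _ _ hGGF
    _ = (fun k => F i k) ⬝ᵥ (fun k => (ctrbGram A B t₁ * Fᵀ) k j) := by
        congr 1; funext k; exact h3 k
    _ = (F * (ctrbGram A B t₁ * Fᵀ)) i j := by rw [Matrix.mul_apply]; rfl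
    _ = (F * ctrbGram A B t₁ * Fᵀ) i j := by rw [Matrix.mul_assoc]

lemma key2 (v w : Fin r → ℝ) :
    (∫ τ in (0:ℝ)..t₁, (v ᵥ* (F * Gm A B t₁ τ)) ⬝ᵥ (w ᵥ* (F * Gm A B t₁ τ)))
      = v ⬝ᵥ ((F * ctrbGram A B t₁ * Fᵀ) *ᵥ w) := by
  have hHH : Continuous fun τ => (F * Gm A B t₁ τ) * (F * Gm A B t₁ τ)ᵀ :=
    (continuous_const.matrix_mul (contGm A B t₁)).matrix_mul
      (continuous_const.matrix_mul (contGm A B t₁)).matrix_transpose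
  have h1 : ∀ τ, (v ᵥ* (F * Gm A B t₁ τ)) ⬝ᵥ (w ᵥ* (F * Gm A B t₁ τ))
      = v ⬝ᵥ (((F * Gm A B t₁ τ) * (F * Gm A B t₁ τ)ᵀ) *ᵥ w) := by
    intro τ
    rw [← Matrix.mulVec_mulVec, Matrix.dotProduct_mulVec, Matrix.mulVec_transpose]
  calc (∫ τ in (0:ℝ)..t₁, (v ᵥ* (F * Gm A B t₁ τ)) ⬝ᵥ (w ᵥ* (F * Gm A B t₁ τ)))
      = ∫ τ in (0:ℝ)..t₁, v ⬝ᵥ (((F * Gm A B t₁ τ) * (F * Gm A B t₁ τ)ᵀ) *ᵥ w) := by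
        congr 1; funext τ; exact h1 τ
    _ = v ⬝ᵥ (fun i => ∫ τ in (0:ℝ)..t₁, (((F * Gm A B t₁ τ) * (F * Gm A B t₁ τ)ᵀ) *ᵥ w) i) :=
        dot_integral _ _ _ _ (cont_mulVec hHH continuous_const)
    _ = v ⬝ᵥ ((F * ctrbGram A B t₁ * Fᵀ) *ᵥ w) := by
        congr 1; funext i
        rw [integral_mulVec_entry hHH w 0 t₁ i]
        congr 1
        funext c d
        exact key3 A B F t₁ c d

lemma contN : Continuous fun s : ℝ =>
    NormedSpace.exp (s • A) * B * Bᵀ * NormedSpace.exp (s • Aᵀ) :=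
  (((NormedSpace.exp_continuous.comp
      (continuous_id.smul continuous_const)).matrix_mul continuous_const).matrix_mul
      continuous_const).matrix_mul
    (NormedSpace.exp_continuous.comp (continuous_id.smul continuous_const))

lemma gram_psd (ht : (0:ℝ) ≤ t₁) : (ctrbGram A B t₁).PosSemidef := by
  have hsym : ∀ s : ℝ,
      (NormedSpace.exp (s • A) * B * Bᵀ * NormedSpace.exp (s • Aᵀ))ᵀ
        = NormedSpace.exp (s • A) * B * Bᵀ * NormedSpace.exp (s • Aᵀ) := by
    intro s
    rw [exp_smul_transpose A s]
    simp only [Matrix.transpose_mul, Matrix.transpose_transpose, Matrix.mul_assoc]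
  refine Matrix.PosSemidef.of_dotProduct_mulVec_nonneg ?_ ?_
  · ext i j
    simp only [conjTranspose_apply, star_trivial]
    show ctrbGram A B t₁ j i = ctrbGram A B t₁ i j
    unfold ctrbGram
    congr 1; funext s
    exact congrFun (congrFun (hsym s) i) j
  · intro x
    have hxs : star x = x := funext fun i => star_trivial _
    rw [hxs]
    have hmv : ∀ i, (ctrbGram A B t₁ *ᵥ x) i
        = ∫ s in (0:ℝ)..t₁,
            ((NormedSpace.exp (s • A) * B * Bᵀ * NormedSpace.exp (s • Aᵀ)) *ᵥ x) i := by
      intro i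
      exact (integral_mulVec_entry (contN A B) x 0 t₁ i).symm
    have h1 : x ⬝ᵥ (ctrbGram A B t₁ *ᵥ x)
        = ∫ s in (0:ℝ)..t₁,
            x ⬝ᵥ ((NormedSpace.exp (s • A) * B * Bᵀ * NormedSpace.exp (s • Aᵀ)) *ᵥ x) := by
      rw [dot_integral 0 t₁ x _ (cont_mulVec (contN A B) continuous_const)]
      congr 1; funext i; exact hmv i
    rw [h1]
    apply intervalIntegral.integral_nonneg ht
    intro s _
    have hpt : x ⬝ᵥ ((NormedSpace.exp (s • A) * B * Bᵀ * NormedSpace.exp (s • Aᵀ)) *ᵥ x)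
        = (((NormedSpace.exp (s • A) * B)ᵀ) *ᵥ x) ⬝ᵥ (((NormedSpace.exp (s • A) * B)ᵀ) *ᵥ x) := by
      have hN : NormedSpace.exp (s • A) * B * Bᵀ * NormedSpace.exp (s • Aᵀ)
          = (NormedSpace.exp (s • A) * B) * (NormedSpace.exp (s • A) * B)ᵀ := by
        rw [exp_smul_transpose A s]
        simp only [Matrix.transpose_mul, Matrix.mul_assoc]
      rw [hN, ← Matrix.mulVec_mulVec, Matrix.dotProduct_mulVec, Matrix.mulVec_transpose]
    rw [hpt]
    exact Finset.sum_nonneg fun i _ => mul_self_nonneg _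

end MaxTCEAux

open MaxTCEAux in
/-- **Maximum target control energy.** If `M = F·W_c(t₁)·Fᵀ` is invertible (hence
symmetric positive definite), then the supremum over unit target states `z*`
(Euclidean norm 1) of the minimum energy of a continuous control steering the target
vector from `0` to `z*` in time `t₁` equals `1 / λ_min(M)`. -/
theorem max_target_control_energy {n p r : ℕ}
    (A : Matrix (Fin n) (Fin n) ℝ) (B : Matrix (Fin n) (Fin p) ℝ)
    (F : Matrix (Fin r) (Fin n) ℝ) (t₁ : ℝ) (ht₁ : 0 < t₁)
    (hM : IsUnit (F * ctrbGram A B t₁ * Fᵀ))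
    (hHerm : (F * ctrbGram A B t₁ * Fᵀ).IsHermitian) :
    sSup { E : ℝ | ∃ z : Fin r → ℝ, Real.sqrt (z ⬝ᵥ z) = 1 ∧
        E = sInf { e : ℝ | ∃ u : ℝ → Fin p → ℝ, Continuous u ∧
          F.mulVec (fun i => ∫ τ in (0:ℝ)..t₁,
            (NormedSpace.exp ((t₁ - τ) • A) * B).mulVec (u τ) i) = z ∧
          e = ∫ t in (0:ℝ)..t₁, u t ⬝ᵥ u t } } =
      1 / (⨅ i, hHerm.eigenvalues i) := by
  classical
  have hdet : IsUnit (F * ctrbGram A B t₁ * Fᵀ).det := (Matrix.isUnit_iff_isUnit_det _).mp hM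
  set M := F * ctrbGram A B t₁ * Fᵀ with hMdef
  have hMinvM : M⁻¹ * M = 1 := Matrix.nonsing_inv_mul M hdet
  have hMMinv : M * M⁻¹ = 1 := Matrix.mul_nonsing_inv M hdet
  -- characterization of the inner infimum
  have hT : ∀ z : Fin r → ℝ,
      sInf { e : ℝ | ∃ u : ℝ → Fin p → ℝ, Continuous u ∧
          F.mulVec (fun i => ∫ τ in (0:ℝ)..t₁,
            (NormedSpace.exp ((t₁ - τ) • A) * B).mulVec (u τ) i) = z ∧
          e = ∫ t in (0:ℝ)..t₁, u t ⬝ᵥ u t } = (M⁻¹ *ᵥ z) ⬝ᵥ z := by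
    intro z
    set w := M⁻¹ *ᵥ z with hw
    have hMw : M *ᵥ w = z := by rw [hw, Matrix.mulVec_mulVec, hMMinv, Matrix.one_mulVec]
    have hustar_cont : Continuous fun τ => w ᵥ* (F * Gm A B t₁ τ) :=
      continuous_pi (cont_vecMul
        (continuous_const.matrix_mul (contGm A B t₁)) continuous_const)
    have hEstar : (∫ t in (0:ℝ)..t₁,
        (w ᵥ* (F * Gm A B t₁ t)) ⬝ᵥ (w ᵥ* (F * Gm A B t₁ t))) = w ⬝ᵥ z := by
      rw [key2 A B F t₁ w w, ← hMdef, hMw]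
    have hLstar : F.mulVec (fun i => ∫ τ in (0:ℝ)..t₁,
        (NormedSpace.exp ((t₁ - τ) • A) * B).mulVec (w ᵥ* (F * Gm A B t₁ τ)) i) = z := by
      funext i
      have hsd : ∀ v : Fin r → ℝ, Pi.single i (1:ℝ) ⬝ᵥ v = v i := fun v => by
        rw [single_dotProduct, one_mul]
      have h := key1 A B F t₁ (Pi.single i 1)
        (fun t => w ᵥ* (F * Gm A B t₁ t)) hustar_cont
      rw [hsd] at h
      rw [h, key2 A B F t₁ (Pi.single i 1) w, ← hMdef, hMw, hsd]
    have hmem : (w ⬝ᵥ z) ∈ { e : ℝ | ∃ u : ℝ → Fin p → ℝ, Continuous u ∧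
        F.mulVec (fun i => ∫ τ in (0:ℝ)..t₁,
          (NormedSpace.exp ((t₁ - τ) • A) * B).mulVec (u τ) i) = z ∧
        e = ∫ t in (0:ℝ)..t₁, u t ⬝ᵥ u t } :=
      ⟨fun t => w ᵥ* (F * Gm A B t₁ t), hustar_cont, hLstar, hEstar.symm⟩
    have hlb : ∀ e ∈ { e : ℝ | ∃ u : ℝ → Fin p → ℝ, Continuous u ∧
        F.mulVec (fun i => ∫ τ in (0:ℝ)..t₁,
          (NormedSpace.exp ((t₁ - τ) • A) * B).mulVec (u τ) i) = z ∧
        e = ∫ t in (0:ℝ)..t₁, u t ⬝ᵥ u t }, w ⬝ᵥ z ≤ e := by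
      rintro e ⟨u, hu, hsteer, rfl⟩
      have hucomp : ∀ j, Continuous fun τ => u τ j := fun j => (continuous_apply j).comp hu
      have hfA : Continuous fun τ => u τ ⬝ᵥ u τ := cont_dot hucomp hucomp
      have hfB : Continuous fun τ => (w ᵥ* (F * Gm A B t₁ τ)) ⬝ᵥ u τ :=
        cont_dot (fun j => (continuous_apply j).comp hustar_cont) hucomp
      have hfC : Continuous fun τ =>
          (w ᵥ* (F * Gm A B t₁ τ)) ⬝ᵥ (w ᵥ* (F * Gm A B t₁ τ)) :=
        cont_dot (fun j => (continuous_apply j).comp hustar_cont)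
          (fun j => (continuous_apply j).comp hustar_cont)
      have hB : (∫ τ in (0:ℝ)..t₁, (w ᵥ* (F * Gm A B t₁ τ)) ⬝ᵥ u τ) = w ⬝ᵥ z := by
        rw [← key1 A B F t₁ w u hu, hsteer]
      have hpt : ∀ τ, (u τ - w ᵥ* (F * Gm A B t₁ τ)) ⬝ᵥ (u τ - w ᵥ* (F * Gm A B t₁ τ))
          = u τ ⬝ᵥ u τ - 2 * ((w ᵥ* (F * Gm A B t₁ τ)) ⬝ᵥ u τ)
            + (w ᵥ* (F * Gm A B t₁ τ)) ⬝ᵥ (w ᵥ* (F * Gm A B t₁ τ)) := by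
        intro τ
        rw [sub_dotProduct, dotProduct_sub, dotProduct_sub,
          dotProduct_comm (u τ) (w ᵥ* (F * Gm A B t₁ τ))]
        ring
      have hnn : 0 ≤ ∫ τ in (0:ℝ)..t₁,
          (u τ - w ᵥ* (F * Gm A B t₁ τ)) ⬝ᵥ (u τ - w ᵥ* (F * Gm A B t₁ τ)) :=
        intervalIntegral.integral_nonneg ht₁.le fun τ _ =>
          Finset.sum_nonneg fun j _ => mul_self_nonneg _
      have hsplit : (∫ τ in (0:ℝ)..t₁,
          (u τ - w ᵥ* (F * Gm A B t₁ τ)) ⬝ᵥ (u τ - w ᵥ* (F * Gm A B t₁ τ)))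
          = (∫ τ in (0:ℝ)..t₁, u τ ⬝ᵥ u τ)
            - 2 * (∫ τ in (0:ℝ)..t₁, (w ᵥ* (F * Gm A B t₁ τ)) ⬝ᵥ u τ)
            + ∫ τ in (0:ℝ)..t₁,
              (w ᵥ* (F * Gm A B t₁ τ)) ⬝ᵥ (w ᵥ* (F * Gm A B t₁ τ)) := by
        calc (∫ τ in (0:ℝ)..t₁,
            (u τ - w ᵥ* (F * Gm A B t₁ τ)) ⬝ᵥ (u τ - w ᵥ* (F * Gm A B t₁ τ)))
            = ∫ τ in (0:ℝ)..t₁, (u τ ⬝ᵥ u τ - 2 * ((w ᵥ* (F * Gm A B t₁ τ)) ⬝ᵥ u τ)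
              + (w ᵥ* (F * Gm A B t₁ τ)) ⬝ᵥ (w ᵥ* (F * Gm A B t₁ τ))) := by
              congr 1; funext τ; exact hpt τ
          _ = _ := by
              rw [intervalIntegral.integral_add
                  (f := fun τ => u τ ⬝ᵥ u τ - 2 * ((w ᵥ* (F * Gm A B t₁ τ)) ⬝ᵥ u τ))
                  ((hfA.sub (continuous_const.mul hfB)).intervalIntegrable _ _)
                  (hfC.intervalIntegrable _ _),
                intervalIntegral.integral_sub (g := fun τ => 2 * ((w ᵥ* (F * Gm A B t₁ τ)) ⬝ᵥ u τ))
                  (hfA.intervalIntegrable _ _)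
                  ((continuous_const.mul hfB).intervalIntegrable _ _),
                intervalIntegral.integral_const_mul]
      rw [hsplit, hB, hEstar] at hnn
      linarith
    exact le_antisymm (csInf_le ⟨w ⬝ᵥ z, hlb⟩ hmem) (le_csInf ⟨_, hmem⟩ hlb)
  rcases Nat.eq_zero_or_pos r with hr | hr
  · subst hr
    have hempty : { E : ℝ | ∃ z : Fin 0 → ℝ, Real.sqrt (z ⬝ᵥ z) = 1 ∧
        E = sInf { e : ℝ | ∃ u : ℝ → Fin p → ℝ, Continuous u ∧
          F.mulVec (fun i => ∫ τ in (0:ℝ)..t₁,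
            (NormedSpace.exp ((t₁ - τ) • A) * B).mulVec (u τ) i) = z ∧
          e = ∫ t in (0:ℝ)..t₁, u t ⬝ᵥ u t } } = ∅ := by
      ext E
      simp only [Set.mem_setOf_eq, Set.mem_empty_iff_false, iff_false, not_exists]
      rintro z ⟨hz, -⟩
      have hzz : z ⬝ᵥ z = 0 := by simp [dotProduct]
      rw [hzz, Real.sqrt_zero] at hz
      exact one_ne_zero hz.symm
    rw [hempty, Real.sSup_empty, iInf_of_isEmpty, Real.sInf_empty, div_zero]
  · haveI : Nonempty (Fin r) := ⟨⟨0, hr⟩⟩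
    have hMpsd : M.PosSemidef := by
      have h := (gram_psd A B t₁ ht₁.le).mul_mul_conjTranspose_same F
      rw [Matrix.conjTranspose_eq_transpose_of_trivial] at h
      rw [hMdef]; exact h
    have hlampos : ∀ i, 0 < hHerm.eigenvalues i := by
      have hdetprod : M.det = ∏ i, hHerm.eigenvalues i := by
        have := hHerm.det_eq_prod_eigenvalues
        simpa [RCLike.ofReal_real_eq_id] using this
      have hprodne : (∏ i, hHerm.eigenvalues i) ≠ 0 := by
        rw [← hdetprod]; exact hdet.ne_zero
      intro i
      exact (hMpsd.eigenvalues_nonneg i).lt_of_ne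
        (Ne.symm (Finset.prod_ne_zero_iff.mp hprodne i (Finset.mem_univ i)))
    obtain ⟨i₀, hi₀⟩ := exists_eq_ciInf_of_finite (f := hHerm.eigenvalues)
    have hmpos : 0 < ⨅ i, hHerm.eigenvalues i := hi₀ ▸ hlampos i₀
    -- Rayleigh lower bound
    have hray : ∀ y : Fin r → ℝ,
        (⨅ i, hHerm.eigenvalues i) * (y ⬝ᵥ y) ≤ y ⬝ᵥ (M *ᵥ y) := by
      intro y
      have hbdd : BddBelow (Set.range hHerm.eigenvalues) :=
        Set.Finite.bddBelow (Set.finite_range _)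
      have hdpsd : (Matrix.diagonal
          (fun i => hHerm.eigenvalues i - ⨅ i, hHerm.eigenvalues i)).PosSemidef :=
        Matrix.posSemidef_diagonal_iff.mpr fun i => sub_nonneg.mpr (ciInf_le hbdd i)
      have hpsd := hdpsd.mul_mul_conjTranspose_same
        (hHerm.eigenvectorUnitary : Matrix (Fin r) (Fin r) ℝ)
      have hU : (hHerm.eigenvectorUnitary : Matrix (Fin r) (Fin r) ℝ)
          * star (hHerm.eigenvectorUnitary : Matrix (Fin r) (Fin r) ℝ) = 1 :=
        Matrix.mem_unitaryGroup_iff.mp (hHerm.eigenvectorUnitary).2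
      have hMsub : (hHerm.eigenvectorUnitary : Matrix (Fin r) (Fin r) ℝ)
          * Matrix.diagonal (fun i => hHerm.eigenvalues i - ⨅ i, hHerm.eigenvalues i)
          * (hHerm.eigenvectorUnitary : Matrix (Fin r) (Fin r) ℝ)ᴴ
          = M - (⨅ i, hHerm.eigenvalues i) • 1 := by
        have hdiag : Matrix.diagonal
            (fun i => hHerm.eigenvalues i - ⨅ i, hHerm.eigenvalues i)
            = Matrix.diagonal (RCLike.ofReal ∘ hHerm.eigenvalues)
              - (⨅ i, hHerm.eigenvalues i) • 1 := by
          ext i j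
          by_cases h : i = j
          · subst h
            simp [Matrix.diagonal_apply_eq, Matrix.smul_apply, Matrix.one_apply_eq,
              RCLike.ofReal_real_eq_id]
          · simp [Matrix.diagonal_apply_ne _ h, Matrix.one_apply_ne h, Matrix.smul_apply, h]
        rw [hdiag, Matrix.mul_sub, Matrix.sub_mul, ← Matrix.star_eq_conjTranspose]
        have hs := hHerm.spectral_theorem
        rw [Unitary.conjStarAlgAut_apply] at hs
        rw [← hs]
        congr 1
        rw [Matrix.mul_smul, Matrix.smul_mul, Matrix.mul_one]
        rw [hU]
      rw [hMsub] at hpsd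
      have h2 := hpsd.dotProduct_mulVec_nonneg y
      rw [show star y = y from funext fun i => star_trivial _, Matrix.sub_mulVec,
        dotProduct_sub, Matrix.smul_mulVec, Matrix.one_mulVec,
        dotProduct_smul, smul_eq_mul] at h2
      linarith
    have hsq1 : ∀ z : Fin r → ℝ, Real.sqrt (z ⬝ᵥ z) = 1 → z ⬝ᵥ z = 1 := by
      intro z hz
      have h0 : 0 ≤ z ⬝ᵥ z := Finset.sum_nonneg fun i _ => mul_self_nonneg _
      have h1 := Real.sq_sqrt h0
      rw [hz, one_pow] at h1
      exact h1.symm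
    have hub : ∀ z : Fin r → ℝ, Real.sqrt (z ⬝ᵥ z) = 1 →
        (M⁻¹ *ᵥ z) ⬝ᵥ z ≤ 1 / (⨅ i, hHerm.eigenvalues i) := by
      intro z hz
      have hzz : z ⬝ᵥ z = 1 := hsq1 z hz
      set w := M⁻¹ *ᵥ z with hw
      have hMw : M *ᵥ w = z := by rw [hw, Matrix.mulVec_mulVec, hMMinv, Matrix.one_mulVec]
      have hray' := hray w
      rw [hMw] at hray'
      have hcs := Finset.sum_mul_sq_le_sq_mul_sq Finset.univ w z
      have h1 : (w ⬝ᵥ z) ^ 2 ≤ (w ⬝ᵥ w) * (z ⬝ᵥ z) := by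
        simpa [dotProduct, pow_two] using hcs
      rw [hzz, mul_one] at h1
      rcases le_or_gt (w ⬝ᵥ z) 0 with hq | hq
      · exact hq.trans (by positivity)
      · rw [le_div_iff₀ hmpos]
        nlinarith [mul_le_mul_of_nonneg_left h1 hmpos.le, hray', hq]
    have hz₀n : Real.sqrt ((hHerm.eigenvectorBasis i₀ : Fin r → ℝ)
        ⬝ᵥ (hHerm.eigenvectorBasis i₀ : Fin r → ℝ)) = 1 := by
      have hnorm := hHerm.eigenvectorBasis.orthonormal.1 i₀
      rw [EuclideanSpace.norm_eq] at hnorm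
      have hdd : (hHerm.eigenvectorBasis i₀ : Fin r → ℝ)
          ⬝ᵥ (hHerm.eigenvectorBasis i₀ : Fin r → ℝ)
          = ∑ i, ‖hHerm.eigenvectorBasis i₀ i‖ ^ 2 := by
        simp [dotProduct, Real.norm_eq_abs, sq_abs, sq]
      rw [hdd]; exact hnorm
    have hq₀ : (M⁻¹ *ᵥ (hHerm.eigenvectorBasis i₀ : Fin r → ℝ))
        ⬝ᵥ (hHerm.eigenvectorBasis i₀ : Fin r → ℝ) = 1 / (⨅ i, hHerm.eigenvalues i) := by
      have heig : M *ᵥ (hHerm.eigenvectorBasis i₀ : Fin r → ℝ)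
          = (⨅ i, hHerm.eigenvalues i) • (hHerm.eigenvectorBasis i₀ : Fin r → ℝ) := by
        have h := hHerm.mulVec_eigenvectorBasis i₀
        rw [hi₀] at h; exact h
      have h1 : M⁻¹ *ᵥ (M *ᵥ (hHerm.eigenvectorBasis i₀ : Fin r → ℝ))
          = (hHerm.eigenvectorBasis i₀ : Fin r → ℝ) := by
        rw [Matrix.mulVec_mulVec, hMinvM, Matrix.one_mulVec]
      rw [heig, Matrix.mulVec_smul] at h1
      have h2 : M⁻¹ *ᵥ (hHerm.eigenvectorBasis i₀ : Fin r → ℝ)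
          = (⨅ i, hHerm.eigenvalues i)⁻¹ • (hHerm.eigenvectorBasis i₀ : Fin r → ℝ) := by
        conv_rhs => rw [← h1]
        rw [smul_smul, inv_mul_cancel₀ hmpos.ne', one_smul]
      rw [h2, smul_dotProduct, smul_eq_mul, hsq1 _ hz₀n, mul_one, one_div]
    have hz₀mem : (1 / (⨅ i, hHerm.eigenvalues i)) ∈ { E : ℝ | ∃ z : Fin r → ℝ,
        Real.sqrt (z ⬝ᵥ z) = 1 ∧
        E = sInf { e : ℝ | ∃ u : ℝ → Fin p → ℝ, Continuous u ∧
          F.mulVec (fun i => ∫ τ in (0:ℝ)..t₁,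
            (NormedSpace.exp ((t₁ - τ) • A) * B).mulVec (u τ) i) = z ∧
          e = ∫ t in (0:ℝ)..t₁, u t ⬝ᵥ u t } } :=
      ⟨(hHerm.eigenvectorBasis i₀ : Fin r → ℝ), hz₀n,
        ((hT _).trans hq₀).symm⟩
    have hubS : ∀ E ∈ { E : ℝ | ∃ z : Fin r → ℝ, Real.sqrt (z ⬝ᵥ z) = 1 ∧
        E = sInf { e : ℝ | ∃ u : ℝ → Fin p → ℝ, Continuous u ∧
          F.mulVec (fun i => ∫ τ in (0:ℝ)..t₁,
            (NormedSpace.exp ((t₁ - τ) • A) * B).mulVec (u τ) i) = z ∧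
          e = ∫ t in (0:ℝ)..t₁, u t ⬝ᵥ u t } },
        E ≤ 1 / (⨅ i, hHerm.eigenvalues i) := by
      rintro E ⟨z, hz, rfl⟩
      rw [hT z]
      exact hub z hz
    exact le_antisymm (csSup_le ⟨_, hz₀mem⟩ hubS)
      (le_csSup ⟨_, hubS⟩ hz₀mem)
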